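/- Let n ≥ 2, p > 1, v ∈ ℝⁿ a unit vector, A = I + (p-2)vvᵀ, and let E be an n×n real matrix with trace(E) = 0 and EA = AEᵀ. Then the nonlinear Kato inequality holds: trace(E²) ≥ (n(p-1)/(n-1)) · ⟨Ev, A⁻¹(Ev)⟩. -/

import Mathlib

open Matrix

section helpers
variable {n : ℕ}

lemma my_mul_vecMulVec (M : Matrix (Fin n) (Fin n) ℝ) (x y : Fin n → ℝ) :
    M * vecMulVec x y = vecMulVec (M.mulVec x) y := by
  ext i j
  simp [Matrix.mul_apply, vecMulVec_apply, Matrix.mulVec, dotProduct, Finset.sum_mul, mul_assoc]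

lemma my_vecMulVec_mul (M : Matrix (Fin n) (Fin n) ℝ) (x y : Fin n → ℝ) :
    vecMulVec x y * M = vecMulVec x (M.vecMul y) := by
  ext i j
  simp [Matrix.mul_apply, vecMulVec_apply, Matrix.vecMul, dotProduct, Finset.mul_sum, mul_assoc]

lemma my_trace_vecMulVec (x y : Fin n → ℝ) : (vecMulVec x y).trace = x ⬝ᵥ y := by
  simp [Matrix.trace, vecMulVec_apply, dotProduct, Matrix.diag]

lemma my_vecMulVec_mulVec (x y z : Fin n → ℝ) :
    (vecMulVec x y).mulVec z = (y ⬝ᵥ z) • x := by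
  ext i
  simp only [Matrix.mulVec, vecMulVec_apply, dotProduct, Pi.smul_apply, smul_eq_mul,
    Finset.sum_mul]
  exact Finset.sum_congr rfl fun _ _ => by ring

lemma my_vecMulVec_transpose (x y : Fin n → ℝ) :
    (vecMulVec x y)ᵀ = vecMulVec y x := by
  ext i j; simp [vecMulVec_apply, mul_comm]

lemma trace_mul_vecMulVec (M : Matrix (Fin n) (Fin n) ℝ) (x y : Fin n → ℝ) :
    (M * vecMulVec x y).trace = y ⬝ᵥ M.mulVec x := by
  rw [my_mul_vecMulVec, my_trace_vecMulVec, dotProduct_comm]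

lemma trace_vmv_mul_vmv (x y z t : Fin n → ℝ) :
    (vecMulVec x y * vecMulVec z t).trace = (y ⬝ᵥ z) * (x ⬝ᵥ t) := by
  rw [my_mul_vecMulVec, my_vecMulVec_mulVec, my_trace_vecMulVec, smul_dotProduct,
    smul_eq_mul]

lemma trace_mul_transpose_sum (M N : Matrix (Fin n) (Fin n) ℝ) :
    (M * Nᵀ).trace = ∑ x : Fin n × Fin n, M x.1 x.2 * N x.1 x.2 := by
  rw [Fintype.sum_prod_type]
  simp [Matrix.trace, Matrix.mul_apply, Matrix.diag]

lemma matrix_CS (M N : Matrix (Fin n) (Fin n) ℝ) :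
    (M * Nᵀ).trace ^ 2 ≤ (M * Mᵀ).trace * (N * Nᵀ).trace := by
  rw [trace_mul_transpose_sum, trace_mul_transpose_sum, trace_mul_transpose_sum]
  simpa [sq] using Finset.sum_mul_sq_le_sq_mul_sq Finset.univ
    (fun x : Fin n × Fin n => M x.1 x.2) (fun x => N x.1 x.2)

end helpers

set_option maxHeartbeats 1000000 in
theorem nonlinear_kato (n : ℕ) (hn : 2 ≤ n) (p : ℝ) (hp : 1 < p)
    (v : Fin n → ℝ) (hv : v ⬝ᵥ v = 1)
    (E : Matrix (Fin n) (Fin n) ℝ) (htr : E.trace = 0)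
    (hEA : E * ((1 : Matrix (Fin n) (Fin n) ℝ) + (p - 2) • vecMulVec v v)
        = ((1 : Matrix (Fin n) (Fin n) ℝ) + (p - 2) • vecMulVec v v) * Eᵀ) :
    (E * E).trace ≥ ((n : ℝ) * (p - 1) / ((n : ℝ) - 1)) *
      (E.mulVec v ⬝ᵥ
        (((1 : Matrix (Fin n) (Fin n) ℝ) + (p - 2) • vecMulVec v v)⁻¹).mulVec (E.mulVec v)) := by
  have hp1 : p - 1 ≠ 0 := ne_of_gt (by linarith)
  set q : ℝ := (2 - p) / (p - 1) with hq
  clear_value q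
  set V : Matrix (Fin n) (Fin n) ℝ := vecMulVec v v with hV
  clear_value V
  set w : Fin n → ℝ := E.mulVec v with hw
  clear_value w
  set a : ℝ := v ⬝ᵥ w with ha
  clear_value a
  set b : ℝ := w ⬝ᵥ w with hb
  clear_value b
  have hwv : w ⬝ᵥ v = a := by rw [ha]; exact dotProduct_comm w v
  have hVV : V * V = V := by
    rw [hV, my_mul_vecMulVec, my_vecMulVec_mulVec, hv, one_smul]
  -- the inverse of A
  have hinv : ((1 : Matrix (Fin n) (Fin n) ℝ) + (p - 2) • V)⁻¹ = 1 + q • V := by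
    apply Matrix.inv_eq_right_inv
    have h1 : ((1 : Matrix (Fin n) (Fin n) ℝ) + (p - 2) • V) * (1 + q • V)
        = 1 + (q + ((p - 2) + q * (p - 2))) • V := by
      simp only [mul_add, add_mul, mul_one, one_mul, smul_mul_assoc, mul_smul_comm, hVV,
        smul_smul, add_smul, smul_add]
      abel
    have h2 : q + ((p - 2) + q * (p - 2)) = 0 := by
      rw [hq]
      field_simp
      ring
    rw [h1, h2, zero_smul, add_zero]
  rw [hinv]
  -- the right hand side inner product
  have hrhs : w ⬝ᵥ ((1 : Matrix (Fin n) (Fin n) ℝ) + q • V).mulVec w = b + q * a ^ 2 := by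
    rw [Matrix.add_mulVec, Matrix.one_mulVec, Matrix.smul_mulVec, hV,
      my_vecMulVec_mulVec, dotProduct_add, dotProduct_smul, dotProduct_smul, smul_eq_mul,
      smul_eq_mul, hwv, ← ha, ← hb]
    ring
  rw [hrhs]
  -- structure equation
  have hE' : Eᵀ = E + (p - 2) • (vecMulVec w v - vecMulVec v w) := by
    have h2 : E + (p - 2) • vecMulVec w v = Eᵀ + (p - 2) • vecMulVec v w := by
      calc E + (p - 2) • vecMulVec w v = E * (1 + (p - 2) • V) := by
            rw [mul_add, mul_one, mul_smul_comm, hV, my_mul_vecMulVec, ← hw]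
        _ = (1 + (p - 2) • V) * Eᵀ := hEA
        _ = Eᵀ + (p - 2) • vecMulVec v w := by
            rw [add_mul, one_mul, smul_mul_assoc, hV, my_vecMulVec_mul,
              Matrix.vecMul_transpose, ← hw]
    have h3 := eq_sub_of_add_eq h2.symm
    rw [h3, smul_sub]
    abel
  set D : Matrix (Fin n) (Fin n) ℝ := vecMulVec w v - vecMulVec v w with hD
  clear_value D
  have hDT : Dᵀ = -D := by
    rw [hD, Matrix.transpose_sub, my_vecMulVec_transpose, my_vecMulVec_transpose, neg_sub]
  have hD2 : (D * D).trace = 2 * a ^ 2 - 2 * b := by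
    rw [hD, sub_mul, mul_sub, mul_sub, Matrix.trace_sub, Matrix.trace_sub, Matrix.trace_sub,
      trace_vmv_mul_vmv, trace_vmv_mul_vmv, trace_vmv_mul_vmv, trace_vmv_mul_vmv,
      hv, ← ha, hwv, ← hb]
    ring
  -- trace (E * D)
  have hED : (E * D).trace = -((p - 2) / 2) * (2 * a ^ 2 - 2 * b) := by
    have e1 : (E * D).trace = (Dᵀ * Eᵀ).trace := by
      rw [← Matrix.transpose_mul, Matrix.trace_transpose]
    have e2 : (Dᵀ * Eᵀ).trace = -((D * Eᵀ).trace) := by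
      rw [hDT, Matrix.neg_mul, Matrix.trace_neg]
    have e3 : (D * Eᵀ).trace = (E * D).trace + (p - 2) * (D * D).trace := by
      rw [hE', mul_add, mul_smul_comm, Matrix.trace_add, Matrix.trace_smul,
        Matrix.trace_mul_comm D E, smul_eq_mul]
    rw [e3] at e2
    rw [e2] at e1
    rw [hD2] at e1
    linarith
  -- trace (E * Eᵀ)
  have hEEt : (E * Eᵀ).trace = (E * E).trace + (p - 2) ^ 2 * (b - a ^ 2) := by
    rw [hE', mul_add, mul_smul_comm, Matrix.trace_add, Matrix.trace_smul, smul_eq_mul,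
      hED]
    ring
  -- the symmetrized matrix
  set S : Matrix (Fin n) (Fin n) ℝ := (2 : ℝ)⁻¹ • (E + Eᵀ) with hS
  clear_value S
  have hST : Sᵀ = S := by
    rw [hS, Matrix.transpose_smul, Matrix.transpose_add, Matrix.transpose_transpose, add_comm]
  have hStr : S.trace = 0 := by
    rw [hS, Matrix.trace_smul, Matrix.trace_add, Matrix.trace_transpose, htr, smul_eq_mul]
    ring
  set TS : ℝ := (S * S).trace with hTS
  clear_value TS
  set T2 : ℝ := (E * E).trace with hT2
  clear_value T2
  have hTSval : TS = T2 + (p - 2) ^ 2 / 2 * (b - a ^ 2) := by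
    rw [hTS, hS, smul_mul_assoc, mul_smul_comm, smul_smul, Matrix.trace_smul, add_mul,
      mul_add, mul_add, Matrix.trace_add, Matrix.trace_add, Matrix.trace_add, smul_eq_mul]
    have e4 : (Eᵀ * E).trace = (E * Eᵀ).trace := Matrix.trace_mul_comm _ _
    have e5 : (Eᵀ * Eᵀ).trace = (E * E).trace := by
      rw [← Matrix.transpose_mul, Matrix.trace_transpose]
    rw [e4, e5, hEEt, ← hT2]
    ring
  -- S applied to v
  have hSv : S.mulVec v = (p / 2) • w + (-((p - 2) / 2 * a)) • v := by
    have e6 : Eᵀ.mulVec v = w + (p - 2) • (w - a • v) := by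
      rw [hE', Matrix.add_mulVec, Matrix.smul_mulVec, hD, Matrix.sub_mulVec,
        my_vecMulVec_mulVec, my_vecMulVec_mulVec, hv, hwv, one_smul, ← hw]
    rw [hS, Matrix.smul_mulVec, Matrix.add_mulVec, e6, ← hw]
    ext i
    simp only [Pi.smul_apply, Pi.add_apply, Pi.sub_apply, Pi.neg_apply, smul_eq_mul]
    ring
  set u : Fin n → ℝ := S.mulVec v with hu
  clear_value u
  have hvu : v ⬝ᵥ u = a := by
    rw [hSv]
    simp only [dotProduct_add, dotProduct_smul, smul_eq_mul, hv, ← ha]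
    ring
  have huv : u ⬝ᵥ v = a := by rw [dotProduct_comm]; exact hvu
  set U2 : ℝ := u ⬝ᵥ u with hU2
  clear_value U2
  have hU2val : U2 = p ^ 2 / 4 * b + ((p - 2) ^ 2 / 4 - p * (p - 2) / 2) * a ^ 2 := by
    rw [hU2, hSv]
    simp only [dotProduct_add, add_dotProduct, dotProduct_smul, smul_dotProduct,
      smul_eq_mul, hv, hwv, ← ha, ← hb]
    ring
  -- the projected matrix X
  set X : Matrix (Fin n) (Fin n) ℝ := S - vecMulVec v u - vecMulVec u v + a • V with hX
  clear_value X
  have hXv : X.mulVec v = 0 := by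
    rw [hX, Matrix.add_mulVec, Matrix.sub_mulVec, Matrix.sub_mulVec,
      Matrix.smul_mulVec, hV, my_vecMulVec_mulVec, my_vecMulVec_mulVec,
      my_vecMulVec_mulVec, hv, huv, one_smul, ← hu]
    ext i
    simp only [Pi.add_apply, Pi.sub_apply, Pi.smul_apply, Pi.zero_apply, smul_eq_mul]
    ring
  have hXT : Xᵀ = X := by
    rw [hX, Matrix.transpose_add, Matrix.transpose_sub, Matrix.transpose_sub,
      Matrix.transpose_smul, hV, my_vecMulVec_transpose, my_vecMulVec_transpose,
      my_vecMulVec_transpose, hST]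
    abel
  have hvX : X.vecMul v = 0 := by
    rw [← hXT, Matrix.vecMul_transpose, hXv]
  have htrX : X.trace = -a := by
    rw [hX, Matrix.trace_add, Matrix.trace_sub, Matrix.trace_sub, Matrix.trace_smul,
      hStr, my_trace_vecMulVec, my_trace_vecMulVec, hV, my_trace_vecMulVec, hvu, huv, hv,
      smul_eq_mul]
    ring
  have hzero1 : ∀ x : Fin n → ℝ, v ⬝ᵥ X.mulVec x = 0 := by
    intro x
    rw [Matrix.dotProduct_mulVec, hvX, zero_dotProduct]
  have hXX : (X * X).trace = TS - 2 * U2 + a ^ 2 := by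
    have e7 : v ⬝ᵥ S.mulVec u = U2 := by
      rw [Matrix.dotProduct_mulVec, ← Matrix.mulVec_transpose, hST, ← hu]
      exact hU2.symm
    have fSX : (S * X).trace = TS - 2 * U2 + a ^ 2 := by
      rw [hX, mul_add, mul_sub, mul_sub, mul_smul_comm, Matrix.trace_add, Matrix.trace_sub,
        Matrix.trace_sub, Matrix.trace_smul, hV, trace_mul_vecMulVec, trace_mul_vecMulVec,
        trace_mul_vecMulVec, e7, ← hu, hvu, ← hTS, ← hU2, smul_eq_mul]
      ring
    have g1 : (vecMulVec v u * X).trace = 0 := by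
      rw [Matrix.trace_mul_comm, trace_mul_vecMulVec, hXv, dotProduct_zero]
    have g2 : (vecMulVec u v * X).trace = 0 := by
      rw [Matrix.trace_mul_comm, trace_mul_vecMulVec, hzero1]
    have g3 : (V * X).trace = 0 := by
      rw [hV, Matrix.trace_mul_comm, trace_mul_vecMulVec, hXv, dotProduct_zero]
    have step1 : X * X = (S - vecMulVec v u - vecMulVec u v + a • V) * X := by
      rw [← hX]
    rw [step1, add_mul, sub_mul, sub_mul, smul_mul_assoc, Matrix.trace_add, Matrix.trace_sub,
      Matrix.trace_sub, Matrix.trace_smul, smul_eq_mul, fSX, g1, g2, g3]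
    ring
  -- the projection P and Cauchy-Schwarz
  set P : Matrix (Fin n) (Fin n) ℝ := 1 - V with hP
  clear_value P
  have hV1 : V.trace = 1 := by rw [hV, my_trace_vecMulVec, hv]
  have hPT : Pᵀ = P := by
    rw [hP, Matrix.transpose_sub, Matrix.transpose_one, hV, my_vecMulVec_transpose]
  have hPP2 : P * P = 1 - V := by
    rw [hP, sub_mul, mul_sub, mul_sub, hVV]
    simp only [one_mul, mul_one]
    abel
  have hPP : (P * Pᵀ).trace = (n : ℝ) - 1 := by
    rw [hPT, hPP2, Matrix.trace_sub, Matrix.trace_one, hV1]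
    simp
  have hXP : (X * Pᵀ).trace = -a := by
    rw [hPT, hP, mul_sub, mul_one, Matrix.trace_sub, htrX, hV, trace_mul_vecMulVec, hXv,
      dotProduct_zero, sub_zero]
  have hXXt : (X * Xᵀ).trace = TS - 2 * U2 + a ^ 2 := by rw [hXT, hXX]
  have hCS : a ^ 2 ≤ (TS - 2 * U2 + a ^ 2) * ((n : ℝ) - 1) := by
    have h := matrix_CS X P
    rw [hXP, hXXt, hPP] at h
    calc a ^ 2 = (-a) ^ 2 := by ring
      _ ≤ _ := h
  -- Cauchy-Schwarz for vectors
  have hab : a ^ 2 ≤ b := by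
    have h := Finset.sum_mul_sq_le_sq_mul_sq Finset.univ v w
    have e1 : ∑ i, v i * w i = a := by rw [ha]; rfl
    have e2 : ∑ i, v i ^ 2 = 1 := by rw [← hv]; exact Finset.sum_congr rfl fun _ _ => sq _
    have e3 : ∑ i, w i ^ 2 = b := by rw [hb]; exact Finset.sum_congr rfl fun _ _ => sq _
    rw [e1, e2, e3, one_mul] at h
    exact h
  -- final assembly
  have hN2 : (2 : ℝ) ≤ (n : ℝ) := by exact_mod_cast hn
  have hN1 : (0 : ℝ) < (n : ℝ) - 1 := by linarith
  rw [hTSval, hU2val] at hCS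
  have key : (n : ℝ) * (p - 1) / ((n : ℝ) - 1) * (b + q * a ^ 2) ≤ T2 := by
    rw [hq, div_mul_eq_mul_div, div_le_iff₀ hN1]
    have expand : (n : ℝ) * (p - 1) * (b + (2 - p) / (p - 1) * a ^ 2)
        = (n : ℝ) * ((p - 1) * b + (2 - p) * a ^ 2) := by
      field_simp
    rw [expand]
    nlinarith [hCS, hab,
      mul_nonneg (mul_nonneg (by linarith : (0:ℝ) ≤ p - 1) (by linarith : (0:ℝ) ≤ (n:ℝ) - 2))
        (by linarith : (0:ℝ) ≤ b - a ^ 2)]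
  exact ge_iff_le.mpr key
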